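/- If a graphic sequence π is obtained from a graphic sequence π' by the Kleitman–Wang lay-off of a term d (i.e., π' arises from π by deleting a term d and subtracting 1 from d suitably chosen other terms), and π' is potentially F-graphic, then π is potentially F-graphic. -/

import Mathlib

open SimpleGraph
open scoped Classical

/-- A sequence of nonnegative integers is graphic if it is the degree sequence
of some simple graph. -/
def IsGraphic {n : ℕ} (d : Fin n → ℕ) : Prop :=
  ∃ G : SimpleGraph (Fin n), ∀ v, G.degree v = d v

/-- A realization of the sequence `d` containing a copy of `F` as a subgraph. -/
def Potentially {k n : ℕ} (F : SimpleGraph (Fin k)) (d : Fin n → ℕ) : Prop :=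
  ∃ G : SimpleGraph (Fin n), (∀ v, G.degree v = d v) ∧
    ∃ f : F →g G, Function.Injective f

/-- The Kleitman–Wang lay-off of the term `d i` from a nonincreasing sequence:
delete the term at position `i` and subtract one from the `d i` largest
remaining terms (kept in order). -/
def kwReduce {n : ℕ} (d : Fin n → ℕ) (i : Fin n) : Fin (n - 1) → ℕ :=
  fun j =>
    have hj : (j : ℕ) < n - 1 := j.isLt
    let idx : Fin n :=
      if (j : ℕ) < (i : ℕ) then ⟨(j : ℕ), by omega⟩ else ⟨(j : ℕ) + 1, by omega⟩
    if (j : ℕ) < d i then d idx - 1 else d idx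

/-- The embedding of `Fin (n-1)` into `Fin n` skipping position `i`. -/
def kwEmb {n : ℕ} (i : Fin n) : Fin (n - 1) → Fin n := fun j =>
  if (j : ℕ) < (i : ℕ) then ⟨(j : ℕ), by have := j.isLt; omega⟩
  else ⟨(j : ℕ) + 1, by have := j.isLt; omega⟩

lemma kwEmb_val {n : ℕ} (i : Fin n) (j : Fin (n - 1)) :
    ((kwEmb i j : Fin n) : ℕ) = if (j : ℕ) < (i : ℕ) then (j : ℕ) else (j : ℕ) + 1 := by
  unfold kwEmb; split <;> rfl

lemma kwEmb_ne {n : ℕ} (i : Fin n) (j : Fin (n - 1)) : kwEmb i j ≠ i := by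
  intro h
  have := congrArg Fin.val h
  rw [kwEmb_val] at this
  split at this <;> omega

lemma kwEmb_inj {n : ℕ} (i : Fin n) : Function.Injective (kwEmb i) := by
  intro a b h
  have := congrArg Fin.val h
  rw [kwEmb_val, kwEmb_val] at this
  apply Fin.ext
  split at this <;> split at this <;> omega

lemma kwEmb_surj {n : ℕ} (i : Fin n) (v : Fin n) (hv : v ≠ i) :
    ∃ j : Fin (n - 1), kwEmb i j = v := by
  have hvi : (v : ℕ) ≠ (i : ℕ) := fun h => hv (Fin.ext h)
  have hi := i.isLt
  have hvn := v.isLt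
  rcases lt_or_gt_of_ne hvi with hlt | hgt
  · refine ⟨⟨(v : ℕ), by omega⟩, ?_⟩
    apply Fin.ext
    rw [kwEmb_val]
    simp only [hlt, if_pos]
  · refine ⟨⟨(v : ℕ) - 1, by omega⟩, ?_⟩
    apply Fin.ext
    rw [kwEmb_val]
    have : ¬ ((v : ℕ) - 1 < (i : ℕ)) := by omega
    simp only [this, if_neg, if_false]
    omega

lemma kwReduce_eq {n : ℕ} (d : Fin n → ℕ) (i : Fin n) (j : Fin (n - 1)) :
    kwReduce d i j = if (j : ℕ) < d i then d (kwEmb i j) - 1 else d (kwEmb i j) := by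
  unfold kwReduce kwEmb
  split <;> rfl

lemma card_filter_val_lt (N m : ℕ) (h : m ≤ N) :
    (Finset.univ.filter fun j : Fin N => (j : ℕ) < m).card = m := by
  have : (Finset.univ.filter fun j : Fin N => (j : ℕ) < m) =
      Finset.map (Fin.castLEEmb h) Finset.univ := by
    ext j
    simp only [Finset.mem_filter, Finset.mem_univ, true_and, Finset.mem_map,
      Fin.castLEEmb, Function.Embedding.coeFn_mk]
    constructor
    · intro hj
      exact ⟨⟨(j : ℕ), hj⟩, rfl⟩
    · rintro ⟨a, rfl⟩
      exact a.isLt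
  rw [this, Finset.card_map, Finset.card_univ, Fintype.card_fin]

/-- The graph obtained from `G'` by inserting a new vertex at position `i`
joined to the first `m` old vertices. -/
def kwGraph {n : ℕ} (i : Fin n) (G' : SimpleGraph (Fin (n - 1))) (m : ℕ) :
    SimpleGraph (Fin n) where
  Adj a b := (∃ j k, a = kwEmb i j ∧ b = kwEmb i k ∧ G'.Adj j k)
    ∨ (a = i ∧ ∃ j, b = kwEmb i j ∧ (j : ℕ) < m)
    ∨ (b = i ∧ ∃ j, a = kwEmb i j ∧ (j : ℕ) < m)
  symm := by
    constructor
    rintro a b (⟨j, k, h1, h2, h3⟩ | hh | hh)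
    · exact Or.inl ⟨k, j, h2, h1, h3.symm⟩
    · exact Or.inr (Or.inr hh)
    · exact Or.inr (Or.inl hh)
  loopless := by
    constructor
    rintro a (⟨j, k, rfl, h2, h3⟩ | ⟨h1, j, h2, _⟩ | ⟨h1, j, h2, _⟩)
    · exact G'.loopless.irrefl k (by rwa [kwEmb_inj i h2] at h3)
    · exact kwEmb_ne i j (h2.symm.trans h1)
    · exact kwEmb_ne i j (h2.symm.trans h1)

lemma kwGraph_adj_i {n : ℕ} (i : Fin n) (G' : SimpleGraph (Fin (n - 1))) (m : ℕ)
    (b : Fin n) : (kwGraph i G' m).Adj i b ↔ ∃ j, b = kwEmb i j ∧ (j : ℕ) < m := by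
  constructor
  · rintro (⟨j, k, h1, _, _⟩ | ⟨_, hh⟩ | ⟨_, j, h1, _⟩)
    · exact absurd h1.symm (kwEmb_ne i j)
    · exact hh
    · exact absurd h1.symm (kwEmb_ne i j)
  · intro hh
    exact Or.inr (Or.inl ⟨rfl, hh⟩)

lemma kwGraph_adj_emb {n : ℕ} (i : Fin n) (G' : SimpleGraph (Fin (n - 1))) (m : ℕ)
    (j₀ : Fin (n - 1)) (b : Fin n) :
    (kwGraph i G' m).Adj (kwEmb i j₀) b ↔
      (∃ k, b = kwEmb i k ∧ G'.Adj j₀ k) ∨ (b = i ∧ (j₀ : ℕ) < m) := by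
  constructor
  · rintro (⟨j, k, h1, h2, h3⟩ | ⟨h1, _⟩ | ⟨h1, j, h2, h3⟩)
    · rw [← kwEmb_inj i h1] at h3; exact Or.inl ⟨k, h2, h3⟩
    · exact absurd h1 (kwEmb_ne i j₀)
    · rw [← kwEmb_inj i h2] at h3; exact Or.inr ⟨h1, h3⟩
  · rintro (⟨k, h1, h2⟩ | ⟨h1, h2⟩)
    · exact Or.inl ⟨j₀, k, rfl, h1, h2⟩
    · exact Or.inr (Or.inr ⟨h1, j₀, rfl, h2⟩)

lemma kwGraph_degree_i {n : ℕ} (i : Fin n) (G' : SimpleGraph (Fin (n - 1))) (m : ℕ)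
    (hm : m ≤ n - 1) : (kwGraph i G' m).degree i = m := by
  rw [← card_neighborFinset_eq_degree]
  have : (kwGraph i G' m).neighborFinset i =
      (Finset.univ.filter fun j : Fin (n - 1) => (j : ℕ) < m).image (kwEmb i) := by
    ext b
    simp only [mem_neighborFinset, kwGraph_adj_i, Finset.mem_image, Finset.mem_filter,
      Finset.mem_univ, true_and]
    constructor
    · rintro ⟨j, rfl, hj⟩; exact ⟨j, hj, rfl⟩
    · rintro ⟨j, hj, rfl⟩; exact ⟨j, rfl, hj⟩
  rw [this, Finset.card_image_of_injective _ (kwEmb_inj i), card_filter_val_lt _ _ hm]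

lemma kwGraph_degree_emb {n : ℕ} (i : Fin n) (G' : SimpleGraph (Fin (n - 1))) (m : ℕ)
    (j₀ : Fin (n - 1)) :
    (kwGraph i G' m).degree (kwEmb i j₀) =
      G'.degree j₀ + (if (j₀ : ℕ) < m then 1 else 0) := by
  rw [← card_neighborFinset_eq_degree, ← card_neighborFinset_eq_degree]
  have hset : (kwGraph i G' m).neighborFinset (kwEmb i j₀) =
      (G'.neighborFinset j₀).image (kwEmb i) ∪
        (if (j₀ : ℕ) < m then {i} else ∅) := by
    ext b
    simp only [mem_neighborFinset, kwGraph_adj_emb, Finset.mem_union, Finset.mem_image]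
    constructor
    · rintro (⟨k, rfl, hk⟩ | ⟨rfl, hm'⟩)
      · exact Or.inl ⟨k, by simpa [mem_neighborFinset] using hk, rfl⟩
      · right; simp [hm']
    · rintro (⟨k, hk, rfl⟩ | hb)
      · exact Or.inl ⟨k, rfl, by simpa [mem_neighborFinset] using hk⟩
      · right
        split at hb
        · simp only [Finset.mem_singleton] at hb
          exact ⟨hb, by assumption⟩
        · simp at hb
  rw [hset, Finset.card_union_of_disjoint, Finset.card_image_of_injective _ (kwEmb_inj i)]
  · congr 1
    split <;> simp
  · rw [Finset.disjoint_right]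
    intro b hb hb'
    obtain ⟨k, _, rfl⟩ := Finset.mem_image.mp hb'
    split at hb
    · simp only [Finset.mem_singleton] at hb
      exact kwEmb_ne i k hb
    · simp at hb

/-- if the graphic sequence `π'` arises from the graphic
sequence `π` by a Kleitman–Wang lay-off, and `π'` is potentially `F`-graphic,
then `π` is potentially `F`-graphic. -/
theorem stmt12 (n : ℕ) (d : Fin n → ℕ) (hd : Antitone d) (i : Fin n)
    (hg : IsGraphic d)
    (kF : ℕ) (F : SimpleGraph (Fin kF))
    (h : Potentially F (kwReduce d i)) :
    Potentially F d := by
  obtain ⟨G', hG', f, hf⟩ := h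
  obtain ⟨G₀, hG₀⟩ := hg
  have hdi : d i ≤ n - 1 := by
    have h1 := G₀.degree_lt_card_verts i
    rw [hG₀, Fintype.card_fin] at h1
    have := i.isLt
    omega
  -- positivity of the reduced entries
  have hpos : ∀ j : Fin (n - 1), (j : ℕ) < d i → 1 ≤ d (kwEmb i j) := by
    intro j hj
    by_contra hzero
    have hz : d (kwEmb i j) = 0 := by omega
    by_cases hji : (j : ℕ) < (i : ℕ)
    · have hle : kwEmb i j ≤ i := by
        rw [Fin.le_def, kwEmb_val]
        simp [hji]
        omega
      have := hd hle
      omega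
    · -- kwEmb i j has value j + 1
      have hval : ((kwEmb i j : Fin n) : ℕ) = (j : ℕ) + 1 := by
        rw [kwEmb_val]; simp [hji]
      set S : Finset (Fin n) := insert i (G₀.neighborFinset i) with hS
      have hcard : S.card = d i + 1 := by
        rw [hS, Finset.card_insert_of_notMem (by simp), card_neighborFinset_eq_degree, hG₀]
      have hsub : S ⊆ Finset.univ.filter fun v : Fin n => (v : ℕ) < (j : ℕ) + 1 := by
        intro v hv
        have hdv : 1 ≤ d v := by
          rw [hS, Finset.mem_insert] at hv
          rcases hv with rfl | hv
          · omega
          · rw [mem_neighborFinset] at hv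
            have : i ∈ G₀.neighborFinset v := by rw [mem_neighborFinset]; exact hv.symm
            have := Finset.card_pos.mpr ⟨i, this⟩
            rw [card_neighborFinset_eq_degree, hG₀] at this
            omega
        simp only [Finset.mem_filter, Finset.mem_univ, true_and]
        by_contra hvj
        have hle : kwEmb i j ≤ v := by
          rw [Fin.le_def, hval]; omega
        have := hd hle
        omega
      have hc2 := Finset.card_le_card hsub
      rw [hcard, card_filter_val_lt _ _ (by have := (kwEmb i j).isLt; omega)] at hc2
      omega
  refine ⟨kwGraph i G' (d i), ?_, ?_⟩
  · intro v
    by_cases hv : v = i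
    · rw [hv]
      exact kwGraph_degree_i i G' (d i) hdi
    · obtain ⟨j, rfl⟩ := kwEmb_surj i v hv
      rw [kwGraph_degree_emb, hG', kwReduce_eq]
      by_cases hj : (j : ℕ) < d i
      · have := hpos j hj
        simp [hj]
        omega
      · simp [hj]
  · refine ⟨⟨fun a => kwEmb i (f a), ?_⟩, (kwEmb_inj i).comp hf⟩
    intro a b hab
    exact Or.inl ⟨f a, f b, rfl, rfl, f.map_adj hab⟩
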